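/- Let H be a real Hilbert space and E : H → ℝ twice continuously differentiable. Let x₀ ∈ H and η, σ, L > 0 satisfy: (i) ‖∇E(x₀)‖ ≤ η; (ii) ⟪Hess E(x₀) v, v⟫ ≥ σ‖v‖² for all v ∈ H; (iii) ‖Hess E(x) − Hess E(y)‖ ≤ L‖x − y‖ (operator norm) for all x, y in the closed ball of radius 2η/σ around x₀; and (iv) 2Lη/σ² < 1. Then there exists x̄ with ‖x̄ − x₀‖ ≤ 2η/σ such that ∇E(x̄) = 0 and ⟪Hess E(x̄) v, v⟫ ≥ (σ − 2Lη/σ)‖v‖² for all v ∈ H. -/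

import Mathlib

open scoped RealInnerProductSpace
open Metric Set

private theorem quad_aux {H : Type*} [NormedAddCommGroup H] [InnerProductSpace ℝ H]
    (G : H → H) (hGd : ∀ z : H, HasFDerivAt G (fderiv ℝ G z) z)
    (x₀ x : H) (L : ℝ)
    (hb : ∀ t ∈ Icc (0:ℝ) 1, ‖fderiv ℝ G (x₀ + t • (x - x₀)) - fderiv ℝ G x₀‖ ≤ L * (t * ‖x - x₀‖)) :
    ‖G x - G x₀ - fderiv ℝ G x₀ (x - x₀)‖ ≤ L / 2 * ‖x - x₀‖ ^ 2 := by
  set A := fderiv ℝ G x₀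
  set w := x - x₀ with hw
  set f : ℝ → H := fun t => G (x₀ + t • w) - G x₀ - t • A w with hf
  have hf' : ∀ t : ℝ, HasDerivAt f (fderiv ℝ G (x₀ + t • w) w - A w) t := by
    intro t
    have hc : HasDerivAt (fun t : ℝ => x₀ + t • w) w t := by
      simpa using ((hasDerivAt_id t).smul_const w).const_add x₀
    have h1 : HasDerivAt (fun t : ℝ => G (x₀ + t • w)) (fderiv ℝ G (x₀ + t • w) w) t :=
      (hGd (x₀ + t • w)).comp_hasDerivAt t hc
    have h2 : HasDerivAt (fun t : ℝ => t • A w) (A w) t := by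
      simpa using (hasDerivAt_id t).smul_const (A w)
    exact (h1.sub_const (G x₀)).sub h2
  have key : ∀ t ∈ Icc (0:ℝ) 1, ‖f t‖ ≤ L * ‖w‖ ^ 2 / 2 * t ^ 2 := by
    refine image_norm_le_of_norm_deriv_right_le_deriv_boundary
      (f := f) (f' := fun t => fderiv ℝ G (x₀ + t • w) w - A w)
      (B := fun t => L * ‖w‖ ^ 2 / 2 * t ^ 2) (B' := fun t => L * ‖w‖ ^ 2 * t) ?_ ?_ ?_ ?_ ?_
    · exact fun t _ => ((hf' t).continuousAt).continuousWithinAt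
    · exact fun t ht => (hf' t).hasDerivWithinAt
    · simp [hf]
    · intro t
      have := ((hasDerivAt_pow 2 t).const_mul (L * ‖w‖ ^ 2 / 2))
      convert this using 1
      · rfl
      · rfl
      · rw [show (2:ℕ) - 1 = 1 from rfl]; push_cast; ring
    · intro t ht
      have h1 : ‖fderiv ℝ G (x₀ + t • w) w - A w‖ ≤ ‖fderiv ℝ G (x₀ + t • w) - A‖ * ‖w‖ := by
        simpa using (fderiv ℝ G (x₀ + t • w) - A).le_opNorm w
      have h2 := hb t ⟨ht.1, ht.2.le⟩
      have hwn : (0:ℝ) ≤ ‖w‖ := norm_nonneg w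
      show ‖fderiv ℝ G (x₀ + t • w) w - A w‖ ≤ L * ‖w‖ ^ 2 * t
      refine h1.trans ((mul_le_mul_of_nonneg_right h2 hwn).trans_eq ?_)
      ring
  have hk := key 1 (by norm_num)
  have hfe : f 1 = G x - G x₀ - A w := by simp [hf, hw]
  rw [hfe] at hk
  calc ‖G x - G x₀ - A w‖ ≤ L * ‖w‖ ^ 2 / 2 * 1 ^ 2 := hk
    _ = L / 2 * ‖w‖ ^ 2 := by ring

/-- Quantitative inverse function theorem used to pass from consistency and
stability to existence of equilibria. -/
theorem stmt_0
    {H : Type*} [NormedAddCommGroup H] [InnerProductSpace ℝ H] [CompleteSpace H]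
    (E : H → ℝ) (hE : ContDiff ℝ 2 E)
    (x₀ : H) (η σ L : ℝ) (hη : 0 < η) (hσ : 0 < σ) (hL : 0 < L)
    (hgrad : ‖gradient E x₀‖ ≤ η)
    (hstab : ∀ v : H, ⟪fderiv ℝ (gradient E) x₀ v, v⟫ ≥ σ * ‖v‖ ^ 2)
    (hLip : ∀ x ∈ Metric.closedBall x₀ (2 * η / σ), ∀ y ∈ Metric.closedBall x₀ (2 * η / σ),
      ‖fderiv ℝ (gradient E) x - fderiv ℝ (gradient E) y‖ ≤ L * ‖x - y‖)
    (hsmall : 2 * L * η / σ ^ 2 < 1) :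
    ∃ xc : H, ‖xc - x₀‖ ≤ 2 * η / σ ∧ gradient E xc = 0 ∧
      ∀ v : H, ⟪fderiv ℝ (gradient E) xc v, v⟫ ≥ (σ - 2 * L * η / σ) * ‖v‖ ^ 2 := by
  classical
  set r : ℝ := 2 * η / σ with hrdef
  have hrpos : 0 < r := by positivity
  set G : H → H := gradient E with hGdef
  set A : H →L[ℝ] H := fderiv ℝ G x₀ with hAdef
  -- smoothness of the gradient
  have hG1 : ContDiff ℝ 1 G := by
    have hGe : G = fun x => (InnerProductSpace.toDual ℝ H).symm (fderiv ℝ E x) := rfl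
    rw [hGe]
    exact (InnerProductSpace.toDual ℝ H).symm.contDiff.comp (hE.fderiv_right (by norm_num))
  have hGd : ∀ z : H, HasFDerivAt G (fderiv ℝ G z) z :=
    fun z => (hG1.differentiable one_ne_zero z).hasFDerivAt
  -- Lax-Milgram inverse of A
  have hcoer : IsCoercive ((innerSL ℝ).comp A : H →L[ℝ] H →L[ℝ] ℝ) := by
    refine ⟨σ, hσ, fun u => ?_⟩
    have h := hstab u
    rw [pow_two] at h
    simpa [mul_assoc] using h
  set e := hcoer.continuousLinearEquivOfBilin with hedef
  have he : ∀ v, e v = A v := by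
    intro v
    apply ext_inner_right ℝ
    intro w
    rw [hcoer.continuousLinearEquivOfBilin_apply]
    simp
  have hAT : ∀ v, A (e.symm v) = v := fun v => by
    rw [← he]; exact e.apply_symm_apply v
  have hTnorm : ∀ v, ‖e.symm v‖ ≤ ‖v‖ / σ := by
    intro v
    rcases eq_or_ne (e.symm v) 0 with h | h
    · rw [h]; simp; positivity
    · have h1 : σ * ‖e.symm v‖ ^ 2 ≤ ⟪A (e.symm v), e.symm v⟫ := hstab _
      rw [hAT] at h1
      have h2 : ⟪v, e.symm v⟫ ≤ ‖v‖ * ‖e.symm v‖ := real_inner_le_norm _ _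
      have h3 : 0 < ‖e.symm v‖ := norm_pos_iff.2 h
      rw [le_div_iff₀ hσ]
      nlinarith [h1, h2, h3]
  -- basic ball facts
  have hx₀S : x₀ ∈ Metric.closedBall x₀ r := Metric.mem_closedBall_self hrpos.le
  have hconv : Convex ℝ (Metric.closedBall x₀ r) := convex_closedBall x₀ r
  have hnormS : ∀ z ∈ Metric.closedBall x₀ r, ‖z - x₀‖ ≤ r := by
    intro z hz; rw [← dist_eq_norm]; exact Metric.mem_closedBall.1 hz
  -- mean value inequality on the ball
  have hmv : ∀ x ∈ Metric.closedBall x₀ r, ∀ y ∈ Metric.closedBall x₀ r,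
      ‖G y - G x - A (y - x)‖ ≤ (L * r) * ‖y - x‖ := by
    intro x hx y hy
    refine Convex.norm_image_sub_le_of_norm_hasFDerivWithin_le'
      (f' := fun z => fderiv ℝ G z) (fun z hz => (hGd z).hasFDerivWithinAt) ?_ hconv hx hy
    intro z hz
    calc ‖fderiv ℝ G z - A‖ ≤ L * ‖z - x₀‖ := hLip z hz x₀ hx₀S
      _ ≤ L * r := by
        have := hnormS z hz
        gcongr
  -- quadratic estimate at the center
  have hquad : ∀ x ∈ Metric.closedBall x₀ r,
      ‖G x - G x₀ - A (x - x₀)‖ ≤ L / 2 * ‖x - x₀‖ ^ 2 := by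
    intro x hx
    refine quad_aux G hGd x₀ x L ?_
    intro t ht
    have hxn : ‖x - x₀‖ ≤ r := hnormS x hx
    have hsub : x₀ + t • (x - x₀) - x₀ = t • (x - x₀) := by abel
    have hz : x₀ + t • (x - x₀) ∈ Metric.closedBall x₀ r := by
      rw [Metric.mem_closedBall, dist_eq_norm, hsub, norm_smul, Real.norm_eq_abs,
        abs_of_nonneg ht.1]
      calc t * ‖x - x₀‖ ≤ 1 * r := by
            apply mul_le_mul ht.2 hxn (norm_nonneg _) zero_le_one
        _ = r := one_mul r
    calc ‖fderiv ℝ G (x₀ + t • (x - x₀)) - A‖ ≤ L * ‖x₀ + t • (x - x₀) - x₀‖ :=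
          hLip _ hz x₀ hx₀S
      _ = L * (t * ‖x - x₀‖) := by
          rw [hsub, norm_smul, Real.norm_eq_abs, abs_of_nonneg ht.1]
  -- the Newton map
  set Φ : H → H := fun x => x - e.symm (G x) with hΦ
  have hΦsub : ∀ x y : H, Φ x - Φ y = e.symm (A (x - y) - (G x - G y)) := by
    intro x y
    have h1 : e.symm (A (x - y)) = x - y := by
      rw [← he (x - y), e.symm_apply_apply]
    calc Φ x - Φ y = (x - y) - (e.symm (G x) - e.symm (G y)) := by
          simp only [hΦ]; abel
      _ = e.symm (A (x - y)) - e.symm (G x - G y) := by rw [h1, map_sub]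
      _ = e.symm (A (x - y) - (G x - G y)) := (map_sub _ _ _).symm
  have hcontr : ∀ x ∈ Metric.closedBall x₀ r, ∀ y ∈ Metric.closedBall x₀ r,
      ‖Φ x - Φ y‖ ≤ (L * r / σ) * ‖x - y‖ := by
    intro x hx y hy
    rw [hΦsub]
    have h1 : ‖A (x - y) - (G x - G y)‖ ≤ (L * r) * ‖x - y‖ := by
      rw [norm_sub_rev]
      exact hmv y hy x hx
    calc ‖e.symm (A (x - y) - (G x - G y))‖ ≤ ‖A (x - y) - (G x - G y)‖ / σ := hTnorm _
      _ ≤ ((L * r) * ‖x - y‖) / σ := by gcongr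
      _ = (L * r / σ) * ‖x - y‖ := by ring
  -- facts about constants
  have hs2 : 2 * L * η < σ ^ 2 := by
    rwa [div_lt_one (by positivity)] at hsmall
  -- self-map
  have hself : ∀ x ∈ Metric.closedBall x₀ r, Φ x ∈ Metric.closedBall x₀ r := by
    intro x hx
    have h1 : Φ x - x₀ = e.symm (A (x - x₀) - G x) := by
      have ha : e.symm (A (x - x₀)) = x - x₀ := by
        rw [← he (x - x₀), e.symm_apply_apply]
      calc Φ x - x₀ = (x - x₀) - e.symm (G x) := by simp only [hΦ]; abel
        _ = e.symm (A (x - x₀)) - e.symm (G x) := by rw [ha]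
        _ = e.symm (A (x - x₀) - G x) := (map_sub _ _ _).symm
    have h2 : ‖A (x - x₀) - G x‖ ≤ L / 2 * ‖x - x₀‖ ^ 2 + η := by
      have h3 := hquad x hx
      have hrw : A (x - x₀) - G x = -(G x - G x₀ - A (x - x₀)) - G x₀ := by abel
      rw [hrw]
      calc ‖-(G x - G x₀ - A (x - x₀)) - G x₀‖
          ≤ ‖-(G x - G x₀ - A (x - x₀))‖ + ‖G x₀‖ := norm_sub_le _ _
        _ ≤ L / 2 * ‖x - x₀‖ ^ 2 + η := by
            rw [norm_neg]; exact add_le_add h3 hgrad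
    have hxn : ‖x - x₀‖ ≤ r := hnormS x hx
    have hxn' : σ * ‖x - x₀‖ ≤ 2 * η := by
      rw [hrdef] at hxn
      calc σ * ‖x - x₀‖ ≤ σ * (2 * η / σ) := by gcongr
        _ = 2 * η := by field_simp
    have h5 : (L / 2 * ‖x - x₀‖ ^ 2 + η) / σ ≤ r := by
      rw [hrdef]
      have hkey : L / 2 * ‖x - x₀‖ ^ 2 + η ≤ 2 * η := by
        nlinarith [mul_le_mul hxn' hxn' (by positivity) (by positivity),
          norm_nonneg (x - x₀), sq_nonneg (‖x - x₀‖), hs2, hη, hL, hσ,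
          mul_nonneg (sq_nonneg ‖x - x₀‖) hL.le]
      gcongr
    rw [Metric.mem_closedBall, dist_eq_norm, h1]
    calc ‖e.symm (A (x - x₀) - G x)‖ ≤ ‖A (x - x₀) - G x‖ / σ := hTnorm _
      _ ≤ (L / 2 * ‖x - x₀‖ ^ 2 + η) / σ := by gcongr
      _ ≤ r := h5
  -- contraction constant
  have hknn : (0:ℝ) ≤ L * r / σ := by positivity
  set k : NNReal := ⟨L * r / σ, hknn⟩ with hk
  have hklt : (k : ℝ) < 1 := by
    show L * r / σ < 1
    have : L * r / σ = 2 * L * η / σ ^ 2 := by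
      rw [hrdef]; field_simp
    rw [this]; exact hsmall
  -- Banach fixed point on the closed ball
  haveI : Nonempty (Metric.closedBall x₀ r) := ⟨⟨x₀, hx₀S⟩⟩
  haveI : CompleteSpace (Metric.closedBall x₀ r) :=
    Metric.isClosed_closedBall.completeSpace_coe
  set f : Metric.closedBall x₀ r → Metric.closedBall x₀ r :=
    fun p => ⟨Φ p, hself p p.2⟩ with hfdef
  have hcf : ContractingWith k f := by
    constructor
    · exact_mod_cast hklt
    · apply LipschitzWith.of_dist_le_mul
      intro p q
      rw [Subtype.dist_eq, Subtype.dist_eq, dist_eq_norm, dist_eq_norm]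
      exact hcontr p p.2 q q.2
  obtain ⟨xcp, hfixp⟩ : ∃ p : Metric.closedBall x₀ r, Function.IsFixedPt f p :=
    ⟨ContractingWith.fixedPoint f hcf, hcf.fixedPoint_isFixedPt⟩
  set xc : H := (xcp : H) with hxc
  have hxcS : xc ∈ Metric.closedBall x₀ r := xcp.2
  have hfix : Φ xc = xc := congrArg Subtype.val hfixp
  have hGzero : G xc = 0 := by
    have h0 : e.symm (G xc) = 0 := by
      have : xc - e.symm (G xc) = xc := hfix
      have := sub_eq_self.1 this
      exact this
    calc G xc = A (e.symm (G xc)) := (hAT _).symm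
      _ = A 0 := by rw [h0]
      _ = 0 := map_zero A
  refine ⟨xc, hnormS xc hxcS, hGzero, ?_⟩
  -- stability at xc
  intro v
  have hd : ‖fderiv ℝ G xc - A‖ ≤ L * r := by
    calc ‖fderiv ℝ G xc - A‖ ≤ L * ‖xc - x₀‖ := hLip xc hxcS x₀ hx₀S
      _ ≤ L * r := by have := hnormS xc hxcS; gcongr
  have h1 : ‖(fderiv ℝ G xc - A) v‖ ≤ (L * r) * ‖v‖ :=
    ((fderiv ℝ G xc - A).le_opNorm v).trans (by gcongr)
  have h2 : -((L * r) * ‖v‖ * ‖v‖) ≤ ⟪(fderiv ℝ G xc - A) v, v⟫ := by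
    have ha := abs_real_inner_le_norm ((fderiv ℝ G xc - A) v) v
    have hb : ‖(fderiv ℝ G xc - A) v‖ * ‖v‖ ≤ (L * r) * ‖v‖ * ‖v‖ := by
      gcongr
    have hc := neg_abs_le ⟪(fderiv ℝ G xc - A) v, v⟫
    linarith [ha, hb, hc]
  have h3 : ⟪fderiv ℝ G xc v, v⟫
      = ⟪A v, v⟫ + ⟪(fderiv ℝ G xc - A) v, v⟫ := by
    rw [ContinuousLinearMap.sub_apply, inner_sub_left]; ring
  have h4 := hstab v
  have hr2 : L * r = 2 * L * η / σ := by
    rw [hrdef]; field_simp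
  rw [h3]
  have : (σ - 2 * L * η / σ) * ‖v‖ ^ 2 = σ * ‖v‖ ^ 2 - (L * r) * ‖v‖ * ‖v‖ := by
    rw [hr2]; ring
  rw [ge_iff_le, this]
  linarith [h4, h2]
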